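/- Let λ be a covariant highest weight for gl(m|n), μ a partition with 0 ≤ λ_i − μ_i ≤ n for all i = 1,…,m, r = μ₁, σ_i = μ_i − i + 1, and l⁰_{r+p,j} = λ⁰_{r+p,j} − j + 1 where λ⁰_{r+p,j} = min{λ'_j, μ'_{j−p}} (with μ'_i = +∞ for i ≤ 0, μ'_{r+1} = 0, λ' the conjugate of Γ_λ). Then for each p = 1,…,n the following identity of rational functions in u holds: ∏_{j=1}^{r+p}(u + l⁰_{r+p,j} + p − 1) / ∏_{j=1}^{r+p−1}(u + l⁰_{r+p−1,j} + p − 1) = (u + λ_{m+p} + m)(u − r)/(u + m) · ∏_{j : 1 ≤ j ≤ m, λ_j − μ_j ≥ p} (u − σ_j + 1)/(u − σ_j). -/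

import Mathlib

/-- Row lengths of the Young diagram `Γ_λ` attached to the covariant highest
weight `λ = (lam | nu)`. -/
def GammaRows (m n : ℕ) (lam : Fin m → ℕ) (nu : Fin n → ℕ) : ℕ → ℕ :=
  fun i => if h : i < m then lam ⟨i, h⟩
    else (Finset.univ.filter fun p : Fin n => i - m + 1 ≤ nu p).card

/-! ### Auxiliary material -/

/-- The linear factor `X + c` in `RatFunc ℚ`. -/
noncomputable def LfQ (c : ℤ) : RatFunc ℚ := RatFunc.X + (c : RatFunc ℚ)

lemma LfQ_def (c : ℤ) : (RatFunc.X : RatFunc ℚ) + (c : RatFunc ℚ) = LfQ c := rfl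

lemma LfQ_ne_zero (c : ℤ) : LfQ c ≠ 0 := by
  have h : LfQ c = algebraMap (Polynomial ℚ) (RatFunc ℚ) (Polynomial.X + (c : Polynomial ℚ)) := by
    unfold LfQ; rw [map_add, RatFunc.algebraMap_X, map_intCast]
  rw [h]
  apply RatFunc.algebraMap_ne_zero
  intro h0
  have h2 := congrArg (fun q => Polynomial.coeff q 1) h0
  simp only [Polynomial.coeff_add, Polynomial.coeff_X_one, Polynomial.coeff_zero] at h2
  rw [show ((c : Polynomial ℚ)) = Polynomial.C (c:ℚ) by simp, Polynomial.coeff_C] at h2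
  simp at h2

/-- Telescoping product of ratios of consecutive linear factors. -/
lemma LfQ_tele (b a : ℤ) (h : b ≤ a) :
    ∏ t ∈ Finset.Ioc b a, (LfQ t / LfQ (t-1)) = LfQ a / LfQ b := by
  obtain ⟨k, rfl⟩ : ∃ k : ℕ, a = b + k := ⟨(a-b).toNat, by omega⟩
  clear h
  induction k with
  | zero => simp [div_self (LfQ_ne_zero b)]
  | succ k ih =>
    have hIoc : Finset.Ioc b (b + (k+1 : ℕ)) = insert (b+k+1) (Finset.Ioc b (b+k)) := by
      ext t; simp only [Finset.mem_Ioc, Finset.mem_insert]; push_cast; omega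
    have hnm : (b+k+1) ∉ Finset.Ioc b (b+(k:ℕ)) := by simp
    rw [hIoc, Finset.prod_insert hnm, ih]
    have h1 : (b+(k:ℤ)+1) - 1 = b + k := by ring
    rw [h1]
    have := LfQ_ne_zero (b+k); have := LfQ_ne_zero b; have := LfQ_ne_zero (b+k+1)
    rw [show ((k+1:ℕ):ℤ) = (k:ℤ) + 1 by push_cast; ring, show b + ((k:ℤ)+1) = b + k + 1 by ring]
    field_simp

/-- Conjugate duality for a weakly decreasing `f : Fin n → ℕ`. -/
lemma conj_card {n : ℕ} (f : Fin n → ℕ) (hf : ∀ i j : Fin n, i ≤ j → f j ≤ f i)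
    (j c : ℕ) (hj : 1 ≤ j) :
    j ≤ (Finset.univ.filter fun q => c ≤ f q).card ↔ ∃ h : j - 1 < n, c ≤ f ⟨j-1, h⟩ := by
  constructor
  · intro h
    have hcard : (Finset.univ.filter fun q : Fin n => c ≤ f q).card ≤ n :=
      (Finset.card_filter_le _ _).trans (by simp)
    have hn' : j - 1 < n := by omega
    refine ⟨hn', ?_⟩
    by_contra hc
    push_neg at hc
    have hsub : (Finset.univ.filter fun q => c ≤ f q) ⊆ Finset.Iio ⟨j-1, hn'⟩ := by
      intro q hq
      simp only [Finset.mem_filter] at hq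
      simp only [Finset.mem_Iio]
      by_contra hlt
      push_neg at hlt
      exact absurd (le_trans hq.2 (hf _ _ hlt)) (by omega)
    have h2 := Finset.card_le_card hsub
    rw [Fin.card_Iio, Fin.val_mk] at h2
    omega
  · rintro ⟨hn', hc⟩
    have hsub : Finset.Iic (⟨j-1, hn'⟩ : Fin n) ⊆ (Finset.univ.filter fun q => c ≤ f q) := by
      intro q hq
      simp only [Finset.mem_Iic] at hq
      simp only [Finset.mem_filter, Finset.mem_univ, true_and]
      exact le_trans hc (hf _ _ hq)
    have h2 := Finset.card_le_card hsub
    rw [Fin.card_Iic, Fin.val_mk] at h2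
    omega

/-- The number of values of `f` that are `≥ j` (the conjugate partition). -/
def AcardQ {m : ℕ} (f : Fin m → ℕ) (j : ℕ) : ℕ := (Finset.univ.filter fun i => j ≤ f i).card

lemma AcardQ_eq {m : ℕ} (f : Fin m → ℕ) (j : ℕ) :
    (Finset.univ.filter fun i => j ≤ f i).card = AcardQ f j := rfl

lemma AcardQ_le {m : ℕ} (f : Fin m → ℕ) (j : ℕ) : AcardQ f j ≤ m :=
  (Finset.card_filter_le _ _).trans (by simp)

lemma AcardQ_anti {m : ℕ} (f : Fin m → ℕ) {j j' : ℕ} (h : j ≤ j') :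
    AcardQ f j' ≤ AcardQ f j := by
  apply Finset.card_le_card
  intro i hi
  simp only [Finset.mem_filter, Finset.mem_univ, true_and] at hi ⊢
  omega

lemma AcardQ_ge {m : ℕ} (f : Fin m → ℕ) (hf : ∀ i j : Fin m, i ≤ j → f j ≤ f i)
    (i : Fin m) (k : ℕ) (hk : k ≤ f i) : (i : ℕ) + 1 ≤ AcardQ f k := by
  have hsub : Finset.Iic i ⊆ (Finset.univ.filter fun q => k ≤ f q) := by
    intro q hq
    simp only [Finset.mem_Iic] at hq
    simp only [Finset.mem_filter, Finset.mem_univ, true_and]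
    exact le_trans hk (hf _ _ hq)
  have h2 := Finset.card_le_card hsub
  rw [Fin.card_Iic] at h2
  exact h2

lemma AcardQ_lt {m : ℕ} (f : Fin m → ℕ) (hf : ∀ i j : Fin m, i ≤ j → f j ≤ f i)
    (i : Fin m) (k : ℕ) (hk : f i < k) : AcardQ f k ≤ (i : ℕ) := by
  have hsub : (Finset.univ.filter fun q => k ≤ f q) ⊆ Finset.Iio i := by
    intro q hq
    simp only [Finset.mem_filter, Finset.mem_univ, true_and] at hq
    simp only [Finset.mem_Iio]
    by_contra hlt
    push_neg at hlt
    exact absurd (le_trans hq (hf _ _ hlt)) (by omega)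
  have h2 := Finset.card_le_card hsub
  rw [Fin.card_Iio] at h2
  exact h2

lemma AcardQ_idx {m : ℕ} (f : Fin m → ℕ) (hf : ∀ i j : Fin m, i ≤ j → f j ≤ f i)
    (s k : ℕ) (hs : 1 ≤ s) (h : s ≤ AcardQ f k) : ∃ h' : s - 1 < m, k ≤ f ⟨s-1, h'⟩ :=
  (conj_card f hf s k hs).mp h

/-- value of `nu` at (1-indexed) `j`, or `0` out of range. -/
def NuV (n : ℕ) (nu : Fin n → ℕ) (j : ℕ) : ℕ := if h : j - 1 < n then nu ⟨j-1, h⟩ else 0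

lemma NuV_anti (n : ℕ) (nu : Fin n → ℕ) (hnu : ∀ p q : Fin n, p ≤ q → nu q ≤ nu p)
    {j j' : ℕ} (hj : 1 ≤ j) (h : j ≤ j') : NuV n nu j' ≤ NuV n nu j := by
  unfold NuV
  by_cases hj' : j' - 1 < n
  · rw [dif_pos hj', dif_pos (show j - 1 < n by omega)]
    exact hnu _ _ (by simp only [Fin.mk_le_mk]; omega)
  · rw [dif_neg hj']
    exact Nat.zero_le _

/-- The column heights `λ'_j` of the diagram `Γ_λ`. -/
def LpQ (m n : ℕ) (lam : Fin m → ℕ) (nu : Fin n → ℕ) (j : ℕ) : ℕ :=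
  AcardQ lam j + NuV n nu j

lemma LpQ_anti (m n : ℕ) (lam : Fin m → ℕ) (nu : Fin n → ℕ)
    (hnu : ∀ p q : Fin n, p ≤ q → nu q ≤ nu p) {j j' : ℕ} (hj : 1 ≤ j) (h : j ≤ j') :
    LpQ m n lam nu j' ≤ LpQ m n lam nu j :=
  Nat.add_le_add (AcardQ_anti lam h) (NuV_anti n nu hnu hj h)

/-- The column heights of `Γ_λ` compute the `Nat.card` appearing in `lam0`. -/
lemma gamma_card (m n : ℕ) (hm : 0 < m) (hn : 0 < n) (lam : Fin m → ℕ) (nu : Fin n → ℕ)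
    (hnu : ∀ p q : Fin n, p ≤ q → nu q ≤ nu p) (j : ℕ) (hj : 1 ≤ j) :
    Nat.card {i : ℕ // j - 1 < GammaRows m n lam nu i} = LpQ m n lam nu j := by
  set nu0 := nu ⟨0, hn⟩ with hnu0
  have hrow_big : ∀ i : ℕ, ¬ i < m →
      GammaRows m n lam nu i = (Finset.univ.filter fun p : Fin n => i - m + 1 ≤ nu p).card :=
    fun i h => dif_neg h
  have hzero : ∀ i : ℕ, m + nu0 ≤ i → GammaRows m n lam nu i = 0 := by
    intro i hi
    rw [hrow_big i (by omega)]
    rw [Finset.card_eq_zero, Finset.filter_eq_empty_iff]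
    intro p _
    have := hnu ⟨0, hn⟩ p (by simp [Fin.le_def])
    omega
  set Fs : Finset ℕ := (Finset.range (m + nu0)).filter
      (fun i => j - 1 < GammaRows m n lam nu i) with hFs
  have hcard1 : Nat.card {i : ℕ // j - 1 < GammaRows m n lam nu i} = Fs.card := by
    rw [← Nat.card_eq_finsetCard]
    apply Nat.card_congr
    apply Equiv.subtypeEquivRight
    intro i
    simp only [hFs, Finset.mem_filter, Finset.mem_range]
    constructor
    · intro h
      refine ⟨?_, h⟩
      by_contra hbig
      rw [hzero i (by omega)] at h
      omega
    · exact fun h => h.2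
  rw [hcard1]
  have hrng : Finset.range (m + nu0) = Finset.range m ∪ Finset.Ico m (m + nu0) := by
    ext i
    simp only [Finset.mem_range, Finset.mem_union, Finset.mem_Ico]
    omega
  have hsplit : Fs = ((Finset.range m).filter (fun i => j - 1 < GammaRows m n lam nu i))
      ∪ ((Finset.Ico m (m + nu0)).filter (fun i => j - 1 < GammaRows m n lam nu i)) := by
    rw [hFs, hrng, Finset.filter_union]
  have hdisj : Disjoint ((Finset.range m).filter (fun i => j - 1 < GammaRows m n lam nu i))
      ((Finset.Ico m (m + nu0)).filter (fun i => j - 1 < GammaRows m n lam nu i)) := by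
    apply Finset.disjoint_filter_filter
    rw [Finset.disjoint_left]
    intro a ha hb
    simp only [Finset.mem_range] at ha
    simp only [Finset.mem_Ico] at hb
    omega
  rw [hsplit, Finset.card_union_of_disjoint hdisj]
  unfold LpQ AcardQ
  congr 1
  · symm
    apply Finset.card_bij (fun (b : Fin m) _ => (b : ℕ))
    · intro b hb
      simp only [Finset.mem_filter, Finset.mem_univ, true_and] at hb
      simp only [Finset.mem_filter, Finset.mem_range]
      refine ⟨b.isLt, ?_⟩
      show j - 1 < GammaRows m n lam nu (b : ℕ)
      have h2 : GammaRows m n lam nu (b : ℕ) = lam ⟨(b : ℕ), b.isLt⟩ := dif_pos b.isLt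
      rw [h2, Fin.eta]
      omega
    · intro b1 _ b2 _ hb
      exact Fin.val_injective hb
    · intro a ha
      simp only [Finset.mem_filter, Finset.mem_range] at ha
      refine ⟨⟨a, ha.1⟩, ?_, rfl⟩
      simp only [Finset.mem_filter, Finset.mem_univ, true_and]
      have h2 : GammaRows m n lam nu a = lam ⟨a, ha.1⟩ := dif_pos ha.1
      omega
  · have heq : (Finset.Ico m (m + nu0)).filter (fun i => j - 1 < GammaRows m n lam nu i)
        = Finset.Ico m (m + NuV n nu j) := by
      ext i
      simp only [Finset.mem_filter, Finset.mem_Ico]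
      constructor
      · rintro ⟨⟨h1, h2⟩, hPi⟩
        rw [hrow_big i (by omega)] at hPi
        have hle : j ≤ (Finset.univ.filter fun p : Fin n => i - m + 1 ≤ nu p).card := by omega
        obtain ⟨hn', hcc⟩ := (conj_card nu hnu j (i - m + 1) hj).mp hle
        refine ⟨h1, ?_⟩
        rw [NuV, dif_pos hn']
        omega
      · rintro ⟨h1, h2⟩
        have hn' : j - 1 < n := by
          by_contra hc
          rw [NuV, dif_neg hc] at h2
          omega
        rw [NuV, dif_pos hn'] at h2
        refine ⟨⟨h1, ?_⟩, ?_⟩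
        · have := hnu ⟨0, hn⟩ ⟨j-1, hn'⟩ (by simp [Fin.le_def])
          omega
        · show j - 1 < GammaRows m n lam nu i
          rw [hrow_big i (by omega)]
          have hle : j ≤ (Finset.univ.filter fun p : Fin n => i - m + 1 ≤ nu p).card := by
            rw [conj_card nu hnu j (i - m + 1) hj]
            exact ⟨hn', by omega⟩
          omega
    rw [heq, Nat.card_Ico]
    omega

/-- Lemma 4.8 of the paper: with `λ⁰_{r+q, j} = min (λ'_j) (μ'_{j-q})`
(the minimum being `λ'_j` when `j ≤ q`), `l⁰_{r+q,j} = λ⁰_{r+q,j} - j + 1`,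
`σ_i = μ_i - i + 1` and `r = μ₁`, for each `p = 1, …, n` the identity of rational
functions in `u` holds:
`∏_{j=1}^{r+p} (u + l⁰_{r+p,j} + p - 1) / ∏_{j=1}^{r+p-1} (u + l⁰_{r+p-1,j} + p - 1)
  = (u + λ_{m+p} + m)(u - r)/(u + m) · ∏_{λ_j - μ_j ≥ p} (u - σ_j + 1)/(u - σ_j)`. -/
theorem stmt_4 (m n : ℕ) (hm : 0 < m) (hn : 0 < n)
    (lam : Fin m → ℕ) (nu : Fin n → ℕ)
    (hlam : ∀ i j : Fin m, i ≤ j → lam j ≤ lam i)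
    (hnu : ∀ p q : Fin n, p ≤ q → nu q ≤ nu p)
    (hell : (Finset.univ.filter fun p : Fin n => nu p ≠ 0).card
      ≤ lam ⟨m - 1, Nat.sub_lt hm one_pos⟩)
    (mu : Fin m → ℕ) (hmu : ∀ i j : Fin m, i ≤ j → mu j ≤ mu i)
    (hmulam : ∀ i : Fin m, mu i ≤ lam i ∧ lam i ≤ mu i + n)
    (p : ℕ) (hp1 : 1 ≤ p) (hpn : p ≤ n)
    (lam0 : ℕ → ℕ → ℕ)
    (hlam0 : ∀ q j, lam0 q j = if q < j then
        min (Nat.card {i : ℕ // j - 1 < GammaRows m n lam nu i})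
          ((Finset.univ.filter fun i : Fin m => j - q ≤ mu i).card)
      else Nat.card {i : ℕ // j - 1 < GammaRows m n lam nu i})
    (r : ℕ) (hr : r = mu ⟨0, hm⟩) :
    (∏ j ∈ Finset.Icc 1 (r + p),
        ((RatFunc.X : RatFunc ℚ) + (((lam0 p j : ℤ) - j + p : ℤ) : RatFunc ℚ))) /
      (∏ j ∈ Finset.Icc 1 (r + p - 1),
        ((RatFunc.X : RatFunc ℚ) + (((lam0 (p - 1) j : ℤ) - j + p : ℤ) : RatFunc ℚ)))
    = ((RatFunc.X : RatFunc ℚ) + (nu ⟨p - 1, by omega⟩ : RatFunc ℚ) + (m : RatFunc ℚ))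
        * ((RatFunc.X : RatFunc ℚ) - (r : RatFunc ℚ))
        / ((RatFunc.X : RatFunc ℚ) + (m : RatFunc ℚ))
        * ∏ i ∈ Finset.univ.filter (fun i : Fin m => mu i + p ≤ lam i),
            ((RatFunc.X : RatFunc ℚ) - (((mu i : ℤ) - (i : ℕ) : ℤ) : RatFunc ℚ) + 1)
            / ((RatFunc.X : RatFunc ℚ) - (((mu i : ℤ) - (i : ℕ) : ℤ) : RatFunc ℚ)) := by
  classical
  -- basic facts
  have hrr : ∀ i : Fin m, mu i ≤ r := by
    intro i
    rw [hr]
    exact hmu ⟨0, hm⟩ i (by simp [Fin.le_def])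
  have hgam : ∀ j : ℕ, 1 ≤ j →
      Nat.card {i : ℕ // j - 1 < GammaRows m n lam nu i} = LpQ m n lam nu j :=
    fun j hj => gamma_card m n hm hn lam nu hnu j hj
  have hLp_anti : ∀ j j' : ℕ, 1 ≤ j → j ≤ j' → LpQ m n lam nu j' ≤ LpQ m n lam nu j :=
    fun j j' h1 h2 => LpQ_anti m n lam nu hnu h1 h2
  have hMp_le : ∀ k : ℕ, AcardQ mu k ≤ m := fun k => AcardQ_le mu k
  have hA_le : ∀ j : ℕ, AcardQ lam j ≤ m := fun j => AcardQ_le lam j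
  have hMpr : AcardQ mu (r+1) = 0 := by
    unfold AcardQ
    rw [Finset.card_eq_zero, Finset.filter_eq_empty_iff]
    intro i _
    have := hrr i
    omega
  have hNuall : ∀ j : ℕ, 1 ≤ NuV n nu j → ∀ i : Fin m, j ≤ lam i := by
    intro j h i
    unfold NuV at h
    by_cases hjn : j - 1 < n
    · rw [dif_pos hjn] at h
      have hsub : Finset.Iic (⟨j-1, hjn⟩ : Fin n)
          ⊆ Finset.univ.filter fun q : Fin n => nu q ≠ 0 := by
        intro q hq
        simp only [Finset.mem_Iic] at hq
        simp only [Finset.mem_filter, Finset.mem_univ, true_and]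
        have := hnu q ⟨j-1, hjn⟩ hq
        omega
      have hcard := Finset.card_le_card hsub
      rw [Fin.card_Iic, Fin.val_mk] at hcard
      have hmi := i.isLt
      have h1 : j ≤ lam ⟨m-1, Nat.sub_lt hm one_pos⟩ := by
        by_cases hj0 : 1 ≤ j
        · omega
        · omega
      exact h1.trans (hlam i ⟨m-1, Nat.sub_lt hm one_pos⟩
        (by rw [Fin.le_def]; simp only [Fin.val_mk]; omega))
    · rw [dif_neg hjn] at h
      omega
  have hApm : ∀ j : ℕ, 1 ≤ NuV n nu j → AcardQ lam j = m := by
    intro j h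
    unfold AcardQ
    rw [Finset.filter_true_of_mem (fun i _ => hNuall j h i), Finset.card_univ, Fintype.card_fin]
  have hA_ge : ∀ (i : Fin m) (j : ℕ), j ≤ lam i → (i:ℕ) + 1 ≤ AcardQ lam j :=
    fun i j hj => AcardQ_ge lam hlam i j hj
  have hMp_ge : ∀ (i : Fin m) (k : ℕ), k ≤ mu i → (i:ℕ) + 1 ≤ AcardQ mu k :=
    fun i k hk => AcardQ_ge mu hmu i k hk
  have hMp_lt : ∀ (i : Fin m) (k : ℕ), mu i < k → AcardQ mu k ≤ (i:ℕ) :=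
    fun i k hk => AcardQ_lt mu hmu i k hk
  have hidx_mu : ∀ s k : ℕ, 1 ≤ s → s ≤ AcardQ mu k → ∃ h' : s - 1 < m, k ≤ mu ⟨s-1, h'⟩ :=
    fun s k hs h => AcardQ_idx mu hmu s k hs h
  have hidx_lam : ∀ s k : ℕ, 1 ≤ s → s ≤ AcardQ lam k → ∃ h' : s - 1 < m, k ≤ lam ⟨s-1, h'⟩ :=
    fun s k hs h => AcardQ_idx lam hlam s k hs h
  have hLpA : ∀ j : ℕ, LpQ m n lam nu j = AcardQ lam j + NuV n nu j := fun _ => rfl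
  -- the interval endpoints
  set aI : ℕ → ℤ := fun k =>
    ((if k = 0 then LpQ m n lam nu p else min (LpQ m n lam nu (p+k)) (AcardQ mu k) : ℕ) : ℤ)
      - k with haI_def
  set bI : ℕ → ℤ := fun k =>
    ((min (LpQ m n lam nu (p+k)) (AcardQ mu (k+1)) : ℕ) : ℤ) - k with hbI_def
  have hbr : bI r = -(r:ℤ) := by
    simp only [hbI_def, hMpr, Nat.min_zero]
    push_cast
    ring
  have hba : ∀ k : ℕ, bI k ≤ aI k := by
    intro k
    have h1 : AcardQ mu (k+1) ≤ AcardQ mu k := AcardQ_anti mu (by omega)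
    simp only [haI_def, hbI_def]
    by_cases hk0 : k = 0
    · subst hk0
      simp only [if_pos rfl, Nat.add_zero]
      have h2 := min_le_left (LpQ m n lam nu p) (AcardQ mu 1)
      push_cast
      omega
    · simp only [if_neg hk0]
      push_cast
      omega
  have hkk : ∀ k k' : ℕ, k < k' → aI k' < bI k := by
    intro k k' h
    have h1 : LpQ m n lam nu (p+k') ≤ LpQ m n lam nu (p+k) := hLp_anti _ _ (by omega) (by omega)
    have h2 : AcardQ mu k' ≤ AcardQ mu (k+1) := AcardQ_anti mu (by omega)
    simp only [haI_def, hbI_def, if_neg (show ¬ k' = 0 by omega)]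
    push_cast
    omega
  -- conversion of the lam0 values
  have hc : ∀ k : ℕ, ((lam0 p (p+k) : ℤ) - (↑(p+k):ℤ) + (p:ℤ)) = aI k := by
    intro k
    rw [hlam0]
    by_cases hk0 : k = 0
    · subst hk0
      rw [if_neg (by omega)]
      rw [hgam (p+0) (by omega)]
      simp only [haI_def, if_pos rfl, Nat.add_zero]
      push_cast
      ring
    · rw [if_pos (by omega)]
      rw [hgam (p+k) (by omega)]
      simp only [show p + k - p = k from by omega]
      rw [AcardQ_eq]
      simp only [haI_def, if_neg hk0]
      push_cast
      ring
  have hd : ∀ k : ℕ, ((lam0 (p-1) (p+k) : ℤ) - (↑(p+k):ℤ) + (p:ℤ)) = bI k := by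
    intro k
    rw [hlam0]
    rw [if_pos (by omega)]
    rw [hgam (p+k) (by omega)]
    simp only [show p + k - (p-1) = k+1 from by omega]
    rw [AcardQ_eq]
    simp only [hbI_def]
    push_cast
    ring
  have hpre : ∀ j ∈ Finset.Ico 1 p, lam0 (p-1) j = lam0 p j := by
    intro j hj
    rw [Finset.mem_Ico] at hj
    rw [hlam0, hlam0, if_neg (by omega), if_neg (by omega)]
  -- the finsets U and V
  set S : Finset (Fin m) := Finset.univ.filter (fun i : Fin m => mu i + p ≤ lam i) with hS_def
  set tS : Fin m → ℤ := fun i => ((i:ℕ):ℤ) + 1 - (mu i : ℤ) with htS_def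
  set U : Finset ℤ := (Finset.range (r+1)).biUnion (fun k => Finset.Ioc (bI k) (aI k)) with hU_def
  set V : Finset ℤ := Finset.Ioc (m:ℤ) ((m:ℤ) + (NuV n nu p : ℤ)) ∪ S.image tS with hV_def
  have hUV : U = V := by
    rw [hU_def, hV_def]
    ext t
    simp only [Finset.mem_biUnion, Finset.mem_range, Finset.mem_Ioc, Finset.mem_union,
      Finset.mem_image, hS_def, Finset.mem_filter, Finset.mem_univ, true_and]
    constructor
    · rintro ⟨k, hk, hbt, hta⟩
      replace hk : k ≤ r := by omega
      have htLp : t + k ≤ (LpQ m n lam nu (p+k) : ℤ) := by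
        by_cases hk0 : k = 0
        · subst hk0
          simp only [haI_def, if_pos rfl, Nat.add_zero] at hta ⊢
          push_cast at hta ⊢
          omega
        · simp only [haI_def, if_neg hk0] at hta
          push_cast at hta
          omega
      by_cases hcm : (m:ℤ) < t
      · left
        refine ⟨hcm, ?_⟩
        have h3 : LpQ m n lam nu (p+k) ≤ LpQ m n lam nu p := hLp_anti _ _ (by omega) (by omega)
        have h4 := hA_le p
        have h5 := hLpA p
        by_cases h6 : 1 ≤ NuV n nu p
        · have h7 : AcardQ lam p = m := hApm p h6
          omega
        · omega
      · right
        push_neg at hcm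
        have hMpkt : (AcardQ mu (k+1) : ℤ) < t + k := by
          simp only [hbI_def] at hbt
          push_cast at hbt
          omega
        have hpos : 1 ≤ t + k := by
          have : (0:ℤ) ≤ (AcardQ mu (k+1) : ℤ) := by positivity
          omega
        obtain ⟨s, hs⟩ : ∃ s : ℕ, (s:ℤ) = t + k := ⟨(t+k).toNat, by omega⟩
        have hsm : s ≤ m := by
          by_cases hk0 : k = 0
          · subst hk0; omega
          · simp only [haI_def, if_neg hk0] at hta
            push_cast at hta
            have := hMp_le k
            omega
        have hs1 : 1 ≤ s := by omega
        have hidx : s - 1 < m := by omega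
        have hmui_ge : k ≤ mu ⟨s-1, hidx⟩ := by
          by_cases hk0 : k = 0
          · omega
          · simp only [haI_def, if_neg hk0] at hta
            push_cast at hta
            have h8 : s ≤ AcardQ mu k := by omega
            obtain ⟨h9, h10⟩ := hidx_mu s k hs1 h8
            exact h10
        have hmui_le : mu ⟨s-1, hidx⟩ ≤ k := by
          by_contra hcon
          push_neg at hcon
          have h11 := hMp_ge ⟨s-1, hidx⟩ (k+1) (by omega)
          simp only [Fin.val_mk] at h11
          omega
        have hlam_i : mu ⟨s-1, hidx⟩ + p ≤ lam ⟨s-1, hidx⟩ := by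
          have hsLp : s ≤ LpQ m n lam nu (p+k) := by omega
          by_cases h6 : 1 ≤ NuV n nu (p+k)
          · have := hNuall (p+k) h6 ⟨s-1, hidx⟩
            omega
          · have h7 := hLpA (p+k)
            have h8 : s ≤ AcardQ lam (p+k) := by omega
            obtain ⟨h9, h10⟩ := hidx_lam s (p+k) hs1 h8
            have h10' : p + k ≤ lam ⟨s-1, hidx⟩ := h10
            omega
        refine ⟨⟨s-1, hidx⟩, hlam_i, ?_⟩
        simp only [htS_def, Fin.val_mk]
        have hc1 : ((s-1:ℕ):ℤ) = (s:ℤ) - 1 := by omega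
        omega
    · rintro (⟨h1, h2⟩ | ⟨i, hiS, rfl⟩)
      · have hν1 : 1 ≤ NuV n nu p := by omega
        have h7 : AcardQ lam p = m := hApm p hν1
        refine ⟨0, by omega, ?_, ?_⟩
        · simp only [hbI_def, Nat.add_zero]
          have h8 := min_le_right (LpQ m n lam nu (p+0)) (AcardQ mu 1)
          have h9 := hMp_le 1
          push_cast
          simp only [Nat.add_zero] at h8
          omega
        · simp only [haI_def, if_pos rfl]
          have h5 := hLpA p
          push_cast
          omega
      · refine ⟨mu i, by (have := hrr i; omega), ?_, ?_⟩
        · simp only [hbI_def, htS_def]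
          have h8 := hMp_lt i (mu i + 1) (by omega)
          have h9 := min_le_right (LpQ m n lam nu (p + mu i)) (AcardQ mu (mu i + 1))
          push_cast
          omega
        · simp only [htS_def]
          have h10 : (i:ℕ)+1 ≤ AcardQ lam (p + mu i) := hA_ge i (p + mu i) (by omega)
          have h11 := hLpA (p + mu i)
          by_cases hk0 : mu i = 0
          · rw [hk0]
            simp only [haI_def, if_pos rfl, Nat.add_zero]
            rw [hk0] at h10 h11
            simp only [Nat.add_zero] at h10 h11
            push_cast
            omega
          · have h12 : (i:ℕ)+1 ≤ AcardQ mu (mu i) := hMp_ge i (mu i) le_rfl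
            simp only [haI_def, if_neg hk0]
            push_cast
            omega
  -- disjointness
  have hdisjU : Set.PairwiseDisjoint ↑(Finset.range (r+1))
      (fun k => Finset.Ioc (bI k) (aI k)) := by
    intro k _ k' _ hne
    simp only [Function.onFun]
    rw [Finset.disjoint_left]
    intro t ht ht'
    rw [Finset.mem_Ioc] at ht ht'
    rcases Nat.lt_or_ge k k' with h | h
    · have := hkk k k' h
      omega
    · have hlt : k' < k := by omega
      have := hkk k' k hlt
      omega
  have hdisjV : Disjoint (Finset.Ioc (m:ℤ) ((m:ℤ) + (NuV n nu p : ℤ))) (S.image tS) := by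
    rw [Finset.disjoint_left]
    intro t ht1 ht2
    rw [Finset.mem_Ioc] at ht1
    rw [Finset.mem_image] at ht2
    obtain ⟨i, _, rfl⟩ := ht2
    have := i.isLt
    simp only [htS_def] at ht1
    omega
  have hinjS : ∀ x ∈ S, ∀ y ∈ S, tS x = tS y → x = y := by
    intro x hx y hy hxy
    simp only [htS_def] at hxy
    rcases lt_trichotomy (x:ℕ) (y:ℕ) with h | h | h
    · have := hmu x y (by rw [Fin.le_def]; omega)
      omega
    · exact Fin.val_injective h
    · have := hmu y x (by rw [Fin.le_def]; omega)
      omega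
  -- rewrite the goal products into LfQ form
  simp only [LfQ_def]
  have hnum : ∏ j ∈ Finset.Icc 1 (r+p), LfQ ((lam0 p j : ℤ) - j + p)
      = (∏ j ∈ Finset.Ico 1 p, LfQ ((lam0 p j : ℤ) - j + p))
        * ∏ k ∈ Finset.range (r+1), LfQ (aI k) := by
    rw [← Finset.Ico_add_one_right_eq_Icc (a := 1) (b := r+p)]
    rw [← Finset.prod_Ico_consecutive (fun j => LfQ ((lam0 p j : ℤ) - j + p))
      (show 1 ≤ p by omega) (show p ≤ r+p+1 by omega)]
    congr 1
    rw [Finset.prod_Ico_eq_prod_range]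
    rw [show r+p+1-p = r+1 from by omega]
    exact Finset.prod_congr rfl fun k _ => congrArg LfQ (hc k)
  have hden : ∏ j ∈ Finset.Icc 1 (r+p-1), LfQ ((lam0 (p-1) j : ℤ) - j + p)
      = (∏ j ∈ Finset.Ico 1 p, LfQ ((lam0 p j : ℤ) - j + p))
        * ∏ k ∈ Finset.range r, LfQ (bI k) := by
    rw [show Finset.Icc 1 (r+p-1) = Finset.Ico 1 (r+p) from by
      rw [← Finset.Ico_add_one_right_eq_Icc]; congr 1; omega]
    rw [← Finset.prod_Ico_consecutive (fun j => LfQ ((lam0 (p-1) j : ℤ) - j + p))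
      (show 1 ≤ p by omega) (show p ≤ r+p by omega)]
    congr 1
    · exact Finset.prod_congr rfl fun j hj => congrArg LfQ (by rw [hpre j hj])
    · rw [Finset.prod_Ico_eq_prod_range]
      rw [show r+p-p = r from by omega]
      exact Finset.prod_congr rfl fun k _ => congrArg LfQ (hd k)
  rw [hnum, hden]
  have hP1 : (∏ j ∈ Finset.Ico 1 p, LfQ ((lam0 p j : ℤ) - j + p)) ≠ 0 :=
    Finset.prod_ne_zero_iff.mpr fun j _ => LfQ_ne_zero _
  rw [mul_div_mul_left _ _ hP1]
  -- the key identity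
  have hprodU : (∏ k ∈ Finset.range (r+1), LfQ (aI k))
      / (∏ k ∈ Finset.range (r+1), LfQ (bI k)) = ∏ t ∈ U, (LfQ t / LfQ (t-1)) := by
    rw [← Finset.prod_div_distrib]
    rw [Finset.prod_congr rfl (fun k _ => (LfQ_tele (bI k) (aI k) (hba k)).symm)]
    rw [hU_def]
    exact (Finset.prod_biUnion hdisjU).symm
  have hprodV : ∏ t ∈ V, (LfQ t / LfQ (t-1))
      = (LfQ ((m:ℤ) + (NuV n nu p : ℤ)) / LfQ (m:ℤ)) * ∏ i ∈ S, (LfQ (tS i) / LfQ (tS i - 1)) := by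
    rw [hV_def, Finset.prod_union hdisjV,
      LfQ_tele (m:ℤ) ((m:ℤ) + (NuV n nu p : ℤ)) (le_add_of_nonneg_right (Int.natCast_nonneg _)),
      Finset.prod_image hinjS]
  have hNb : (∏ k ∈ Finset.range (r+1), LfQ (bI k))
      = (∏ k ∈ Finset.range r, LfQ (bI k)) * LfQ (bI r) := Finset.prod_range_succ _ _
  have hbne : (∏ k ∈ Finset.range r, LfQ (bI k)) ≠ 0 :=
    Finset.prod_ne_zero_iff.mpr fun k _ => LfQ_ne_zero _
  have hkey : (∏ k ∈ Finset.range (r+1), LfQ (aI k)) / (∏ k ∈ Finset.range r, LfQ (bI k))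
      = ((LfQ ((m:ℤ) + (NuV n nu p : ℤ)) / LfQ (m:ℤ))
          * ∏ i ∈ S, (LfQ (tS i) / LfQ (tS i - 1))) * LfQ (-(r:ℤ)) := by
    rw [← hprodV, ← hUV, ← hprodU, hNb, ← hbr]
    have h1 := LfQ_ne_zero (bI r)
    field_simp
  rw [hkey]
  -- match the right-hand side
  have hNup : (nu ⟨p - 1, by omega⟩ : ℕ) = NuV n nu p := by
    unfold NuV
    rw [dif_pos (show p - 1 < n by omega)]
  have e1 : ((RatFunc.X : RatFunc ℚ) + (nu ⟨p - 1, by omega⟩ : RatFunc ℚ) + (m : RatFunc ℚ))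
      = LfQ ((m:ℤ) + (NuV n nu p : ℤ)) := by
    rw [show ((nu ⟨p - 1, by omega⟩ : ℕ) : RatFunc ℚ) = ((NuV n nu p : ℕ) : RatFunc ℚ) from by
      rw [hNup]]
    unfold LfQ
    push_cast
    ring
  have e2 : ((RatFunc.X : RatFunc ℚ) - (r : RatFunc ℚ)) = LfQ (-(r:ℤ)) := by
    unfold LfQ
    push_cast
    ring
  have e3 : ((RatFunc.X : RatFunc ℚ) + (m : RatFunc ℚ)) = LfQ ((m:ℕ):ℤ) := by
    unfold LfQ
    push_cast
    ring
  have e4 : ∏ i ∈ S,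
      (((RatFunc.X : RatFunc ℚ) - (((mu i : ℤ) - (i : ℕ) : ℤ) : RatFunc ℚ) + 1)
        / ((RatFunc.X : RatFunc ℚ) - (((mu i : ℤ) - (i : ℕ) : ℤ) : RatFunc ℚ)))
      = ∏ i ∈ S, (LfQ (tS i) / LfQ (tS i - 1)) := by
    apply Finset.prod_congr rfl
    intro i _
    have n1 : (RatFunc.X : RatFunc ℚ) - (((mu i : ℤ) - (i : ℕ) : ℤ) : RatFunc ℚ) + 1
        = LfQ (tS i) := by
      simp only [htS_def]
      unfold LfQ
      push_cast
      ring
    have n2 : (RatFunc.X : RatFunc ℚ) - (((mu i : ℤ) - (i : ℕ) : ℤ) : RatFunc ℚ)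
        = LfQ (tS i - 1) := by
      simp only [htS_def]
      unfold LfQ
      push_cast
      ring
    rw [n1, n2]
  rw [e1, e2, e3, e4]
  ring
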